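/- Let X be a real Banach space, A : X →L[ℝ] X a continuous linear map, and u, χ ∈ X with A u = 0 and A χ = α • χ + β • u for real numbers α, β with α ≠ 0. Then for every τ ∈ ℝ, the operator exponential satisfies exp(−(τ • A)) χ = Real.exp (−τ * α) • χ + ((β / α) * (Real.exp (−τ * α) − 1)) • u. -/

import Mathlib

open NormedSpace in
lemma exp_apply_eigenvector {X : Type*} [NormedAddCommGroup X] [NormedSpace ℝ X]
    [CompleteSpace X] (B : X →L[ℝ] X) (x : X) (c : ℝ) (h : B x = c • x) :
    (NormedSpace.exp B) x = Real.exp c • x := by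
  have hpow : ∀ n : ℕ, (B ^ n) x = c ^ n • x := by
    intro n
    induction n with
    | zero => simp
    | succ n ih =>
      rw [pow_succ, pow_succ]
      have : (B ^ n * B) x = (B ^ n) (B x) := rfl
      rw [this, h, map_smul, ih, smul_smul, mul_comm]
  have hsum := NormedSpace.expSeries_summable' (𝕂 := ℝ) B
  have happ : (NormedSpace.exp B) x =
      ∑' n : ℕ, ((n.factorial : ℝ)⁻¹ • B ^ n) x := by
    rw [NormedSpace.exp_eq_tsum ℝ]
    exact (ContinuousLinearMap.apply ℝ X x).map_tsum hsum
  rw [happ]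
  have : ∀ n : ℕ, ((n.factorial : ℝ)⁻¹ • B ^ n) x
      = ((n.factorial : ℝ)⁻¹ * c ^ n) • x := by
    intro n
    simp [hpow n, smul_smul]
  simp_rw [this]
  rw [Summable.tsum_smul_const]
  · congr 1
    rw [Real.exp_eq_exp_ℝ, NormedSpace.exp_eq_tsum ℝ]
    simp [smul_eq_mul]
  · exact (NormedSpace.expSeries_summable' (𝕂 := ℝ) c).congr (by simp [smul_eq_mul])

/-- If `A u = 0` and `A χ = α • χ + β • u` with `α ≠ 0`, then
`exp(-τA) χ = e^{-τα} • χ + (β/α)(e^{-τα} - 1) • u`. -/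
theorem stmt_10 {X : Type*} [NormedAddCommGroup X] [NormedSpace ℝ X] [CompleteSpace X]
    (A : X →L[ℝ] X) (u χ : X) (α β : ℝ) (hα : α ≠ 0)
    (hu : A u = 0) (hχ : A χ = α • χ + β • u) (τ : ℝ) :
    (NormedSpace.exp (-(τ • A))) χ =
      Real.exp (-τ * α) • χ + ((β / α) * (Real.exp (-τ * α) - 1)) • u := by
  set B : X →L[ℝ] X := -(τ • A) with hB
  have hBu : B u = (0 : ℝ) • u := by simp [hB, hu]
  have hBv : B (χ + (β / α) • u) = (-τ * α) • (χ + (β / α) • u) := by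
    have : B (χ + (β / α) • u) = -(τ • (A χ)) + (β/α) • -(τ • (A u)) := by
      simp [hB]; module
    rw [this, hu, hχ]
    have hc : -τ * α * (β / α) = -(τ * β) := by field_simp
    simp only [smul_zero, neg_zero, add_zero, smul_add, smul_smul, hc]
    module
  have h1 := exp_apply_eigenvector B u 0 hBu
  have h2 := exp_apply_eigenvector B (χ + (β / α) • u) (-τ * α) hBv
  rw [map_add, map_smul, h1] at h2
  rw [Real.exp_zero, one_smul] at h2
  have : (NormedSpace.exp B) χ
      = Real.exp (-τ * α) • (χ + (β / α) • u) - (β / α) • u := by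
    rw [← h2]; abel
  rw [this]
  rw [smul_add, smul_smul]
  module
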